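/- Suppose the shortest s–v path in the weighted disk graph G contains an irregular edge uv, where u ≠ s is the predecessor of v in the shortest path tree T. Then |uv| ≥ r_v/2, unless r_u > r_v and v is a leaf of T. -/

import Mathlib

noncomputable section

/-- Points of the plane. -/
abbrev Pt := EuclideanSpace ℝ (Fin 2)

/-- Membership in the closed axis-parallel square of Euclidean diameter `d`
(side `d/√2`) centered at `p`. -/
def inSq (p : Pt) (d : ℝ) (x : Pt) : Prop :=
  ∀ i, |x i - p i| ≤ d / (2 * Real.sqrt 2)

/-- Adjacency in the weighted disk graph: distinct points whose disks intersect. -/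
def Adj (r : Pt → ℝ) (x y : Pt) : Prop := x ≠ y ∧ dist x y ≤ r x + r y

/-- A (simple) path from `s` to `v` in the weighted disk graph on `P`. -/
def IsPath (P : Set Pt) (r : Pt → ℝ) (s v : Pt) (L : List Pt) : Prop :=
  L.head? = some s ∧ L.getLast? = some v ∧ (∀ x ∈ L, x ∈ P) ∧ L.Nodup ∧ L.Chain' (Adj r)

/-- The length of a path: the sum of the Euclidean lengths of its edges. -/
def pathLen : List Pt → ℝ
  | [] => 0
  | [_] => 0
  | a :: b :: L => dist a b + pathLen (b :: L)

/-- Shortest-path distance from `s` to `v` in the weighted disk graph on `P`. -/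
def spDist (P : Set Pt) (r : Pt → ℝ) (s v : Pt) : ℝ :=
  sInf (pathLen '' {L | IsPath P r s v L})

lemma pathLen_nonneg (L : List Pt) : 0 ≤ pathLen L := by
  match L with
  | [] => simp [pathLen]
  | [_] => simp [pathLen]
  | a :: b :: L =>
      have := pathLen_nonneg (b :: L)
      simp only [pathLen]
      positivity

lemma pathLen_append_cons (A : List Pt) (y : Pt) (B : List Pt) :
    pathLen (A ++ y :: B) = pathLen (A ++ [y]) + pathLen (y :: B) := by
  induction A with
  | nil => simp [pathLen]
  | cons a A ih =>
      match A with
      | [] => simp [pathLen]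
      | b :: A' =>
          simp only [List.cons_append, pathLen, List.append_eq] at ih ⊢
          rw [ih]; ring

lemma pathLen_append_singleton (L : List Pt) (e y : Pt) (h : L.getLast? = some e) :
    pathLen (L ++ [y]) = pathLen L + dist e y := by
  induction L with
  | nil => simp at h
  | cons a L ih =>
      match L with
      | [] =>
          simp only [List.getLast?_singleton, Option.some.injEq] at h
          subst h
          simp [pathLen]
      | b :: L' =>
          rw [List.getLast?_cons_cons] at h
          simp only [List.cons_append, pathLen, List.append_eq] at ih ⊢
          rw [ih h]; ring

lemma spDist_le {P : Set Pt} {r : Pt → ℝ} {s y : Pt} {M : List Pt}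
    (h : IsPath P r s y M) : spDist P r s y ≤ pathLen M := by
  apply csInf_le
  · exact ⟨0, by rintro x ⟨L, -, rfl⟩; exact pathLen_nonneg L⟩
  · exact ⟨M, h, rfl⟩

lemma spDist_le_of_mem {P : Set Pt} {r : Pt → ℝ} {s e : Pt} {L : List Pt}
    (h : IsPath P r s e L) {y : Pt} (hy : y ∈ L) : spDist P r s y ≤ pathLen L := by
  obtain ⟨A, B, rfl⟩ := List.append_of_mem hy
  obtain ⟨h1, h2, h3, h4, h5⟩ := h
  have hpre : (A ++ [y]) <+: (A ++ y :: B) := ⟨B, by simp⟩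
  have hpath : IsPath P r s y (A ++ [y]) := by
    refine ⟨?_, by simp, fun x hx => h3 x (hpre.sublist.mem hx), h4.sublist hpre.sublist,
      h5.prefix hpre⟩
    · cases A with
      | nil => simp at h1 ⊢; exact h1
      | cons a A' => simp at h1 ⊢; exact h1
  calc spDist P r s y ≤ pathLen (A ++ [y]) := spDist_le hpath
    _ ≤ pathLen (A ++ [y]) + pathLen (y :: B) := le_add_of_nonneg_right (pathLen_nonneg _)
    _ = pathLen (A ++ y :: B) := (pathLen_append_cons A y B).symm

lemma IsPath.extend {P : Set Pt} {r : Pt → ℝ} {s e y : Pt} {L : List Pt}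
    (h : IsPath P r s e L) (hyP : y ∈ P) (hyL : y ∉ L) (ha : Adj r e y) :
    IsPath P r s y (L ++ [y]) := by
  obtain ⟨h1, h2, h3, h4, h5⟩ := h
  refine ⟨?_, by simp, ?_, ?_, ?_⟩
  · cases L with
    | nil => simp at h1
    | cons a L' => simp at h1 ⊢; exact h1
  · intro x hx
    rcases List.mem_append.1 hx with hx | hx
    · exact h3 x hx
    · simp at hx; subst hx; exact hyP
  · exact List.nodup_append.2 ⟨h4, List.nodup_singleton y, by
      intro x hxL b hb; simp at hb; subst hb; exact fun hxy => hyL (hxy ▸ hxL)⟩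
  · rw [show List.Chain' (Adj r) (L ++ [y]) = List.IsChain (Adj r) (L ++ [y]) from rfl, List.isChain_append]
    exact ⟨h5, List.isChain_singleton y, by
      intro x hx y' hy'; simp at hy'; subst hy'
      rw [h2] at hx; simp at hx; subst hx; exact ha⟩

/-- Assume every vertex of `P` is connected to `s` and shortest paths
from `s` are unique, and let `prv` be the predecessor function of the resulting shortest
path tree `T` rooted at `s`. Suppose the shortest `s`–`v` path contains an irregular edge
`uv` where `u = prv v ≠ s` (irregular: `2·min(r u, r v) ≤ max(r u, r v)`). Then
`|uv| ≥ r v / 2`, unless `r u > r v` and `v` is a leaf of `T`. -/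
theorem irregular_predecessor_edge_long
    (P : Set Pt) (r : Pt → ℝ) (hr : ∀ p ∈ P, 1 ≤ r p)
    (s : Pt) (hs : s ∈ P)
    (hconn : ∀ v ∈ P, ∃ L, IsPath P r s v L)
    (huniq : ∀ v ∈ P, ∃! L, IsPath P r s v L ∧ pathLen L = spDist P r s v)
    (prv : Pt → Pt)
    (hprv : ∀ v ∈ P, v ≠ s → prv v ∈ P ∧ Adj r (prv v) v ∧
      spDist P r s v = spDist P r s (prv v) + dist (prv v) v)
    (v : Pt) (hv : v ∈ P) (hvs : v ≠ s) (hus : prv v ≠ s)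
    (hirr : 2 * min (r (prv v)) (r v) ≤ max (r (prv v)) (r v))
    (hnot : ¬ (r v < r (prv v) ∧ ¬ ∃ x ∈ P, x ≠ s ∧ prv x = v)) :
    r v / 2 ≤ dist (prv v) v := by
  obtain ⟨huP, hadj_uv, hdv⟩ := hprv v hv hvs
  by_contra hcon
  push_neg at hcon
  have huv_ne : prv v ≠ v := hadj_uv.1
  have hduv_pos : 0 < dist (prv v) v := dist_pos.2 huv_ne
  have hrv1 : 1 ≤ r v := hr v hv
  obtain ⟨Lu, ⟨hLu, hLulen⟩, -⟩ := huniq (prv v) huP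
  rcases le_or_gt (r (prv v)) (r v) with hle | hlt
  · -- Case A : r u ≤ r v, so 2 r u ≤ r v
    have h2u : 2 * r (prv v) ≤ r v := by
      rwa [min_eq_left hle, max_eq_right hle] at hirr
    obtain ⟨hwP, hadj_wu, hdu⟩ := hprv (prv v) huP hus
    have hwu_ne : prv (prv v) ≠ prv v := hadj_wu.1
    have hdwu_pos : 0 < dist (prv (prv v)) (prv v) := dist_pos.2 hwu_ne
    obtain ⟨Lw, ⟨hLw, hLwlen⟩, -⟩ := huniq (prv (prv v)) hwP
    have hvLu : v ∉ Lu := by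
      intro hmem
      have h1 := spDist_le_of_mem hLu hmem
      rw [hLulen] at h1
      linarith
    have hvLw : v ∉ Lw := by
      intro hmem
      have h1 := spDist_le_of_mem hLw hmem
      rw [hLwlen] at h1
      linarith
    have hwv_ne : prv (prv v) ≠ v := by
      intro h
      rw [h] at hdu
      have := dist_comm v (prv v)
      linarith
    have hadj_wv : Adj r (prv (prv v)) v := by
      refine ⟨hwv_ne, ?_⟩
      have htri := dist_triangle (prv (prv v)) (prv v) v
      have := hadj_wu.2
      linarith
    have hM1 : IsPath P r s v (Lu ++ [v]) := hLu.extend hv hvLu hadj_uv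
    have hM2 : IsPath P r s v (Lw ++ [v]) := hLw.extend hv hvLw hadj_wv
    have hlen1 : pathLen (Lu ++ [v]) = spDist P r s v := by
      rw [pathLen_append_singleton Lu (prv v) v hLu.2.1, hLulen, hdv]
    have hlen2 : pathLen (Lw ++ [v]) = spDist P r s v := by
      have hle2 : pathLen (Lw ++ [v]) ≤ spDist P r s v := by
        rw [pathLen_append_singleton Lw (prv (prv v)) v hLw.2.1, hLwlen]
        have htri := dist_triangle (prv (prv v)) (prv v) v
        linarith
      exact le_antisymm hle2 (hlen1 ▸ hlen1 ▸ spDist_le hM2)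
    obtain ⟨L, -, hLuniq⟩ := huniq v hv
    have e1 : Lu ++ [v] = L := hLuniq _ ⟨hM1, hlen1⟩
    have e2 : Lw ++ [v] = L := hLuniq _ ⟨hM2, hlen2⟩
    have eL : Lu = Lw := by
      have := congrArg List.dropLast (e1.trans e2.symm)
      simpa [List.dropLast_concat] using this
    have : some (prv v) = some (prv (prv v)) := by
      rw [← hLu.2.1, ← hLw.2.1, eL]
    exact hwu_ne (Option.some_injective _ this).symm
  · -- Case B : r v < r u, so 2 r v ≤ r u, and v has a child x
    have h2v : 2 * r v ≤ r (prv v) := by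
      rwa [min_eq_right hlt.le, max_eq_left hlt.le] at hirr
    have hchild : ∃ x ∈ P, x ≠ s ∧ prv x = v := by
      by_contra hB
      exact hnot ⟨hlt, hB⟩
    obtain ⟨x, hxP, hxs, hxv⟩ := hchild
    obtain ⟨-, hadj_vx, hdx⟩ := hprv x hxP hxs
    rw [hxv] at hadj_vx hdx
    have hvx_ne : v ≠ x := hadj_vx.1
    have hdvx_pos : 0 < dist v x := dist_pos.2 hvx_ne
    have hux_ne : prv v ≠ x := by
      intro h
      rw [← h] at hdx
      have := dist_comm (prv v) v
      rw [dist_comm v (prv v)] at hdx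
      linarith
    have hadj_ux : Adj r (prv v) x := by
      refine ⟨hux_ne, ?_⟩
      have htri := dist_triangle (prv v) v x
      have := hadj_vx.2
      linarith
    obtain ⟨Lv, ⟨hLv, hLvlen⟩, -⟩ := huniq v hv
    have hxLu : x ∉ Lu := by
      intro hmem
      have h1 := spDist_le_of_mem hLu hmem
      rw [hLulen] at h1
      linarith
    have hxLv : x ∉ Lv := by
      intro hmem
      have h1 := spDist_le_of_mem hLv hmem
      rw [hLvlen] at h1
      linarith
    have hM1 : IsPath P r s x (Lv ++ [x]) := hLv.extend hxP hxLv hadj_vx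
    have hM2 : IsPath P r s x (Lu ++ [x]) := hLu.extend hxP hxLu hadj_ux
    have hlen1 : pathLen (Lv ++ [x]) = spDist P r s x := by
      rw [pathLen_append_singleton Lv v x hLv.2.1, hLvlen, hdx]
    have hlen2 : pathLen (Lu ++ [x]) = spDist P r s x := by
      have hle2 : pathLen (Lu ++ [x]) ≤ spDist P r s x := by
        rw [pathLen_append_singleton Lu (prv v) x hLu.2.1, hLulen]
        have htri := dist_triangle (prv v) v x
        linarith
      exact le_antisymm hle2 (spDist_le hM2)
    obtain ⟨L, -, hLuniq⟩ := huniq x hxP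
    have e1 : Lv ++ [x] = L := hLuniq _ ⟨hM1, hlen1⟩
    have e2 : Lu ++ [x] = L := hLuniq _ ⟨hM2, hlen2⟩
    have eL : Lv = Lu := by
      have := congrArg List.dropLast (e1.trans e2.symm)
      simpa [List.dropLast_concat] using this
    have : some v = some (prv v) := by
      rw [← hLv.2.1, ← hLu.2.1, eL]
    exact huv_ne (Option.some_injective _ this).symm
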